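/- If for every S^ρ-restricted dual vector α and every profile s ∈ S the aggregate deviation gain ∑_{i∈N} D_i(s, α_i) equals zero, then the correlated equilibrium ρ is correlated perfect. -/

import Mathlib

open Finset Filter Topology

variable {ι : Type*} [Fintype ι] [DecidableEq ι]

def IsDist {S : ι → Type*} [∀ i, Fintype (S i)] (ρ : (∀ i, S i) → ℝ) : Prop :=
  (∀ s, 0 ≤ ρ s) ∧ ∑ s, ρ s = 1

def CompletelyMixed {S : ι → Type*} [∀ i, Fintype (S i)] (ρ : (∀ i, S i) → ℝ) : Prop :=
  ∀ s, 0 < ρ s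

def marg {S : ι → Type*} [∀ i, Fintype (S i)] [∀ i, DecidableEq (S i)]
    (ρ : (∀ i, S i) → ℝ) (i : ι) (si : S i) : ℝ :=
  ∑ s : ∀ j, S j, if s i = si then ρ s else 0

/-- The quantity `∑_{s_{-i}} ρ(s_i, s_{-i}) (u_i(s_i,s_{-i}) - u_i(s_i', s_{-i}))`. -/
def devGain {S : ι → Type*} [∀ i, Fintype (S i)] [∀ i, DecidableEq (S i)]
    (u : ∀ _ : ι, (∀ j, S j) → ℝ) (ρ : (∀ i, S i) → ℝ) (i : ι) (si si' : S i) : ℝ :=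
  ∑ s : ∀ j, S j, if s i = si then ρ s * (u i s - u i (Function.update s i si')) else 0

def IsCE {S : ι → Type*} [∀ i, Fintype (S i)] [∀ i, DecidableEq (S i)]
    (u : ∀ _ : ι, (∀ j, S j) → ℝ) (ρ : (∀ i, S i) → ℝ) : Prop :=
  IsDist ρ ∧ ∀ i (si si' : S i), 0 ≤ devGain u ρ i si si'

def IsCPE {S : ι → Type*} [∀ i, Fintype (S i)] [∀ i, DecidableEq (S i)]
    (u : ∀ _ : ι, (∀ j, S j) → ℝ) (ρ : (∀ i, S i) → ℝ) : Prop :=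
  IsDist ρ ∧ ∃ ρk : ℕ → (∀ i, S i) → ℝ,
    (∀ k, IsDist (ρk k) ∧ CompletelyMixed (ρk k)) ∧
    (∀ s, Tendsto (fun k => ρk k s) atTop (𝓝 (ρ s))) ∧
    ∀ k i si, 0 < marg ρ i si → ∀ si', 0 ≤ devGain u (ρk k) i si si'

/-- Expected gain `D_i(s, α_i)` to player `i` from deviation plan `αi` at profile `s`. -/
def Dgain {S : ι → Type*} [∀ i, Fintype (S i)] [∀ i, DecidableEq (S i)]
    (u : ∀ _ : ι, (∀ j, S j) → ℝ) (i : ι) (s : ∀ j, S j) (αi : S i → S i → ℝ) : ℝ :=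
  ∑ ti, αi (s i) ti * (u i (Function.update s i ti) - u i s)

/-- A dual vector: each `α i (s_i)` is a distribution over deviations, and the aggregate
expected gain is nonnegative at every profile. -/
def IsDualVector {S : ι → Type*} [∀ i, Fintype (S i)] [∀ i, DecidableEq (S i)]
    (u : ∀ _ : ι, (∀ j, S j) → ℝ) (α : ∀ i, S i → S i → ℝ) : Prop :=
  (∀ i si, (∀ ti, 0 ≤ α i si ti) ∧ ∑ ti, α i si ti = 1) ∧
  ∀ s : ∀ j, S j, 0 ≤ ∑ i, Dgain u i s (α i)

/-- The dual vector is `S^ρ`-restricted: it prescribes obedience off the support of `ρ`. -/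
def RestrictedTo {S : ι → Type*} [∀ i, Fintype (S i)] [∀ i, DecidableEq (S i)]
    (ρ : (∀ i, S i) → ℝ) (α : ∀ i, S i → S i → ℝ) : Prop :=
  ∀ i si, ¬ 0 < marg ρ i si → ∀ ti, α i si ti = if ti = si then 1 else 0

namespace CPEAux
variable {E : Type*} [Fintype E]

def dotp (v w : E → ℝ) : ℝ := ∑ e, v e * w e

lemma dotp_lin (a t : ℝ) (f g z : E → ℝ) :
    dotp (fun e => a * f e - t * g e) z = a * dotp f z - t * dotp g z := by
  unfold dotp
  rw [Finset.mul_sum, Finset.mul_sum, ← Finset.sum_sub_distrib]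
  exact Finset.sum_congr rfl fun e _ => by ring

lemma dotp_lin' (a t : ℝ) (f g z : E → ℝ) :
    dotp z (fun e => a * f e - t * g e) = a * dotp z f - t * dotp z g := by
  unfold dotp
  rw [Finset.mul_sum, Finset.mul_sum, ← Finset.sum_sub_distrib]
  exact Finset.sum_congr rfl fun e _ => by ring

lemma farkasFin : ∀ (n : ℕ) (d : Fin n → E → ℝ) (c : E → ℝ),
    (∃ y : Fin n → ℝ, (∀ i, 0 ≤ y i) ∧ ∀ e, c e = ∑ i, y i * d i e) ∨
    (∃ x : E → ℝ, (∀ i, dotp (d i) x ≤ 0) ∧ 0 < dotp c x) := by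
  intro n
  induction n with
  | zero =>
    intro d c
    by_cases hc : ∀ e, c e = 0
    · exact Or.inl ⟨fun i => i.elim0, fun i => i.elim0, fun e => by simp [hc e]⟩
    · push_neg at hc
      obtain ⟨e0, he0⟩ := hc
      refine Or.inr ⟨c, fun i => i.elim0, ?_⟩
      exact Finset.sum_pos' (fun e _ => mul_self_nonneg _)
        ⟨e0, Finset.mem_univ _, mul_self_pos.mpr he0⟩
  | succ n ih =>
    intro d c
    set v : E → ℝ := d 0 with hv
    set D : Fin n → E → ℝ := fun i => d i.succ with hD
    rcases ih D c with ⟨y, hy, hrep⟩ | ⟨x, hx, hcx⟩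
    · refine Or.inl ⟨Fin.cases 0 y, fun i => ?_, fun e => ?_⟩
      · refine Fin.cases ?_ ?_ i
        · exact le_refl 0
        · exact hy
      · rw [Fin.sum_univ_succ]
        simp [hrep e, hD]
    · rcases le_or_gt (dotp v x) 0 with h0 | h0
      · refine Or.inr ⟨x, fun i => ?_, hcx⟩
        refine Fin.cases h0 hx i
      · set a := dotp v x with ha
        rcases ih (fun i => fun e => a * D i e - dotp (D i) x * v e)
            (fun e => a * c e - dotp c x * v e) with ⟨y, hy, hrep⟩ | ⟨z, hz1, hz2⟩
        · have hsum : ∑ i, y i * dotp (D i) x ≤ 0 :=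
            Finset.sum_nonpos fun i _ => mul_nonpos_of_nonneg_of_nonpos (hy i) (hx i)
          set μ := (dotp c x - ∑ i, y i * dotp (D i) x) / a with hμdef
          have hμ : 0 ≤ μ := div_nonneg (by linarith) h0.le
          have haμ : a * μ = dotp c x - ∑ i, y i * dotp (D i) x := by
            rw [hμdef]; field_simp
          refine Or.inl ⟨Fin.cases μ y, fun i => ?_, fun e => ?_⟩
          · refine Fin.cases hμ hy i
          · have h2 : ∑ i, y i * (a * D i e - dotp (D i) x * v e)
                = a * (∑ i, y i * D i e) - (∑ i, y i * dotp (D i) x) * v e := by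
              rw [Finset.mul_sum, Finset.sum_mul, ← Finset.sum_sub_distrib]
              exact Finset.sum_congr rfl fun i _ => by ring
            have h3 := hrep e
            rw [h2] at h3
            have key : a * c e = a * (μ * v e + ∑ i, y i * D i e) := by
              have : a * (μ * v e) = (dotp c x - ∑ i, y i * dotp (D i) x) * v e := by
                rw [← mul_assoc, haμ]
              nlinarith [h3, this]
            have hc2 : c e = μ * v e + ∑ i, y i * D i e :=
              mul_left_cancel₀ (ne_of_gt h0) key
            rw [Fin.sum_univ_succ]
            simpa using hc2
        · refine Or.inr ⟨fun e => a * z e - dotp v z * x e, fun i => ?_, ?_⟩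
          · refine Fin.cases ?_ ?_ i
            · rw [show (d 0) = v from rfl, dotp_lin']
              ring_nf
              exact le_of_eq (by ring)
            · intro j
              have := hz1 j
              rw [dotp_lin] at this
              rw [show d j.succ = D j from rfl, dotp_lin']
              linarith [this]
          · have := hz2
            rw [dotp_lin] at this
            rw [dotp_lin']
            linarith [this]

lemma farkas {κ : Type*} [Fintype κ] (d : κ → E → ℝ) (c : E → ℝ) :
    (∃ y : κ → ℝ, (∀ i, 0 ≤ y i) ∧ ∀ e, c e = ∑ i, y i * d i e) ∨
    (∃ x : E → ℝ, (∀ i, dotp (d i) x ≤ 0) ∧ 0 < dotp c x) := by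
  obtain e := Fintype.equivFin κ
  rcases farkasFin (Fintype.card κ) (fun i => d (e.symm i)) c with ⟨y, hy, hrep⟩ | ⟨x, hx, hcx⟩
  · refine Or.inl ⟨fun b => y (e b), fun b => hy _, fun s => ?_⟩
    rw [hrep s]
    exact (Fintype.sum_equiv e _ _ (fun b => by simp)).symm
  · exact Or.inr ⟨x, fun b => by simpa using hx (e b), hcx⟩

lemma exists_pos_feasible {κ : Type*} [Fintype κ] (d : κ → E → ℝ)
    (hz : ∀ y : κ → ℝ, (∀ b, 0 ≤ y b) → (∀ e, 0 ≤ ∑ b, y b * d b e) →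
      ∀ e, ∑ b, y b * d b e = 0) :
    ∃ η : E → ℝ, (∀ e, 0 < η e) ∧ ∀ b, dotp (d b) η ≤ 0 := by
  classical
  have H : ∀ e0 : E, ∃ x : E → ℝ, (∀ e, 0 ≤ x e) ∧ 0 < x e0 ∧ ∀ b, dotp (d b) x ≤ 0 := by
    intro e0
    rcases farkas (Sum.elim d (fun s : E => fun e => -(if e = s then (1:ℝ) else 0)))
        (fun e => if e = e0 then (1:ℝ) else 0) with ⟨y, hy, hrep⟩ | ⟨x, hx, hcx⟩
    · exfalso
      have key : ∀ e, ∑ b, y (Sum.inl b) * d b e = (if e = e0 then (1:ℝ) else 0) + y (Sum.inr e) := by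
        intro e
        have := hrep e
        rw [Fintype.sum_sum_type] at this
        have h2 : ∑ s : E, y (Sum.inr s) * (Sum.elim d (fun s : E => fun e => -(if e = s then (1:ℝ) else 0)) (Sum.inr s)) e
            = -(y (Sum.inr e)) := by
          simp [mul_ite]
        simp only [Sum.elim_inl] at this
        rw [h2] at this
        linarith [this]
      have hnn : ∀ e, 0 ≤ ∑ b, y (Sum.inl b) * d b e := by
        intro e
        rw [key e]
        have := hy (Sum.inr e)
        split_ifs <;> linarith
      have := hz (fun b => y (Sum.inl b)) (fun b => hy _) hnn e0
      rw [key e0] at this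
      simp at this
      linarith [hy (Sum.inr e0), this]
    · refine ⟨x, fun e => ?_, ?_, fun b => hx (Sum.inl b)⟩
      · have := hx (Sum.inr e)
        unfold dotp at this
        simp [ite_mul] at this
        linarith
      · unfold dotp at hcx
        simpa [ite_mul] using hcx
  choose x hx1 hx2 hx3 using H
  refine ⟨fun e => ∑ e0, x e0 e, fun e => ?_, fun b => ?_⟩
  · exact Finset.sum_pos' (fun e0 _ => hx1 e0 e) ⟨e, Finset.mem_univ _, hx2 e⟩
  · unfold dotp
    have heq : ∑ e, d b e * ∑ e0, x e0 e = ∑ e0, dotp (d b) (x e0) := by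
      unfold dotp
      rw [← Finset.sum_comm]
      exact Finset.sum_congr rfl fun e _ => by rw [Finset.mul_sum]
    rw [heq]
    exact Finset.sum_nonpos fun e0 _ => hx3 e0 b


end CPEAux

/-- If every `S^ρ`-restricted dual vector has zero aggregate gain at every profile,
then the correlated equilibrium `ρ` is correlated perfect. -/
theorem cpe_of_dual_eq_zero {S : ι → Type*} [∀ i, Fintype (S i)] [∀ i, DecidableEq (S i)] (u : ∀ _ : ι, (∀ j, S j) → ℝ)
    (ρ : (∀ i, S i) → ℝ) (hce : IsCE u ρ)
    (hdual : ∀ α : ∀ i, S i → S i → ℝ, IsDualVector u α → RestrictedTo ρ α →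
      ∀ s : ∀ j, S j, ∑ i, Dgain u i s (α i) = 0) :
    IsCPE u ρ := by
  classical
  obtain ⟨⟨hρ0, hρ1⟩, hceq⟩ := hce
  by_cases hne : Nonempty (∀ j, S j)
  case neg =>
    exfalso
    haveI := not_nonempty_iff.mp hne
    simp at hρ1
  -- the family of deviation-gain vectors
  set d : (Σ i : ι, S i × S i) → (∀ j, S j) → ℝ := fun b s =>
    if 0 < marg ρ b.1 b.2.1 ∧ s b.1 = b.2.1
    then u b.1 (Function.update s b.1 b.2.2) - u b.1 s else 0 with hd
  -- Step 1: hypothesis of the alternative, from `hdual`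
  have hz : ∀ y : (Σ i : ι, S i × S i) → ℝ, (∀ b, 0 ≤ y b) →
      (∀ e, 0 ≤ ∑ b, y b * d b e) → ∀ e, ∑ b, y b * d b e = 0 := by
    intro y hy hg
    set M : ℝ := (∑ b, y b) + 1 with hM
    have hMpos : 0 < M := by
      have : 0 ≤ ∑ b, y b := Finset.sum_nonneg fun b _ => hy b
      linarith
    set z : ∀ i, S i → S i → ℝ :=
      fun i si ti => if 0 < marg ρ i si then y ⟨i, (si, ti)⟩ / M else 0 with hzdef
    have hz0 : ∀ i si ti, 0 ≤ z i si ti := by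
      intro i si ti
      show 0 ≤ if 0 < marg ρ i si then y ⟨i, (si, ti)⟩ / M else 0
      split_ifs
      · exact div_nonneg (hy _) hMpos.le
      · exact le_refl 0
    have hT : ∀ (i : ι) (si : S i), ∑ ti, z i si ti ≤ 1 := by
      intro i si
      have hzz : ∀ ti : S i, z i si ti = if 0 < marg ρ i si then y ⟨i, (si, ti)⟩ / M else 0 :=
        fun ti => rfl
      simp only [hzz]
      split_ifs with h
      case pos =>
        have hsub : ∑ ti, y ⟨i, (si, ti)⟩ ≤ ∑ b, y b := by
          have hinj : ∀ a ∈ (univ : Finset (S i)), ∀ b ∈ (univ : Finset (S i)),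
              (⟨i, (si, a)⟩ : Σ i : ι, S i × S i) = ⟨i, (si, b)⟩ → a = b := by
            intro a _ b _ hab
            simpa using hab
          calc ∑ ti, y ⟨i, (si, ti)⟩
              = ∑ b ∈ (univ : Finset (S i)).image (fun ti => (⟨i, (si, ti)⟩ : Σ i : ι, S i × S i)), y b :=
                (Finset.sum_image hinj).symm
            _ ≤ ∑ b, y b := Finset.sum_le_sum_of_subset_of_nonneg (Finset.subset_univ _)
                (fun b _ _ => hy b)
        rw [← Finset.sum_div, div_le_one hMpos]
        linarith
      case neg => simp
    -- the dual vector associated to `y`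
    set α : ∀ i, S i → S i → ℝ :=
      fun i si ti => (if ti = si then 1 - ∑ ti', z i si ti' else 0) + z i si ti with hα
    have hα1 : ∀ (i : ι) (si : S i), (∀ ti, 0 ≤ α i si ti) ∧ ∑ ti, α i si ti = 1 := by
      intro i si
      constructor
      · intro ti
        show 0 ≤ (if ti = si then 1 - ∑ ti', z i si ti' else 0) + z i si ti
        have h1 := hz0 i si ti
        have h2 := hT i si
        split_ifs <;> linarith
      · show ∑ ti, ((if ti = si then 1 - ∑ ti', z i si ti' else 0) + z i si ti) = 1
        rw [Finset.sum_add_distrib, Finset.sum_ite_eq' univ si (fun _ => 1 - ∑ ti', z i si ti')]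
        simp
    have hDi : ∀ (s : ∀ j, S j) (i : ι), Dgain u i s (α i)
        = ∑ ti, z i (s i) ti * (u i (Function.update s i ti) - u i s) := by
      intro s i
      unfold Dgain
      have hsp : ∀ ti : S i, α i (s i) ti * (u i (Function.update s i ti) - u i s)
          = (if ti = s i then (1 - ∑ ti', z i (s i) ti')
              * (u i (Function.update s i ti) - u i s) else 0)
            + z i (s i) ti * (u i (Function.update s i ti) - u i s) := by
        intro ti
        show ((if ti = s i then 1 - ∑ ti', z i (s i) ti' else 0) + z i (s i) ti) * _ = _
        split_ifs <;> ring
      rw [Finset.sum_congr rfl fun ti _ => hsp ti, Finset.sum_add_distrib,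
        Finset.sum_ite_eq' univ (s i)
          (fun ti => (1 - ∑ ti', z i (s i) ti') * (u i (Function.update s i ti) - u i s))]
      simp [Function.update_eq_self]
    have hterm : ∀ (s : ∀ j, S j) (i : ι) (si ti : S i), y ⟨i, (si, ti)⟩ * d ⟨i, (si, ti)⟩ s
        = if si = s i then M * (z i (s i) ti * (u i (Function.update s i ti) - u i s)) else 0 := by
      intro s i si ti
      have hzz : z i (s i) ti = if 0 < marg ρ i (s i) then y ⟨i, (s i, ti)⟩ / M else 0 := rfl
      by_cases h1 : si = s i
      · subst h1
        rw [if_pos rfl, hzz]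
        show y ⟨i, (s i, ti)⟩ * (if 0 < marg ρ i (s i) ∧ s i = s i
            then u i (Function.update s i ti) - u i s else 0) = _
        by_cases h2 : 0 < marg ρ i (s i)
        · rw [if_pos ⟨h2, rfl⟩, if_pos h2]
          field_simp
        · rw [if_neg (by tauto), if_neg h2]
          ring
      · rw [if_neg h1]
        have hd0 : d ⟨i, (si, ti)⟩ s = 0 := by
          show (if 0 < marg ρ i si ∧ s i = si then _ else 0) = 0
          rw [if_neg (by exact fun h => h1 h.2.symm)]
        rw [hd0, mul_zero]
    have hDg : ∀ s : ∀ j, S j, ∑ b, y b * d b s = M * ∑ i, Dgain u i s (α i) := by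
      intro s
      calc ∑ b, y b * d b s
          = ∑ i, ∑ p : S i × S i, y ⟨i, p⟩ * d ⟨i, p⟩ s := by
            rw [← Finset.univ_sigma_univ, Finset.sum_sigma]
        _ = ∑ i, ∑ si, ∑ ti, y ⟨i, (si, ti)⟩ * d ⟨i, (si, ti)⟩ s := by
            exact Finset.sum_congr rfl fun i _ => by rw [Fintype.sum_prod_type]
        _ = ∑ i : ι, M * (∑ ti, z i (s i) ti * (u i (Function.update s i ti) - u i s)) := by
            refine Finset.sum_congr rfl fun i _ => ?_
            rw [Finset.sum_comm]
            rw [Finset.sum_congr rfl fun ti _ => Finset.sum_congr rfl fun si _ => hterm s i si ti]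
            rw [Finset.sum_congr rfl fun ti (_ : ti ∈ univ) => Finset.sum_ite_eq' univ (s i)
              (fun _ => M * (z i (s i) ti * (u i (Function.update s i ti) - u i s)))]
            rw [Finset.mul_sum]
            simp
        _ = M * ∑ i, Dgain u i s (α i) := by
            rw [Finset.mul_sum]
            exact Finset.sum_congr rfl fun i _ => by rw [hDi s i]
    have hdv : IsDualVector u α := by
      refine ⟨hα1, fun s => ?_⟩
      have hgs := hg s
      rw [hDg s] at hgs
      by_contra hcon
      push_neg at hcon
      nlinarith
    have hres : RestrictedTo ρ α := by
      intro i si hm ti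
      have hz1 : ∀ ti' : S i, z i si ti' = 0 := by
        intro ti'
        show (if 0 < marg ρ i si then _ else 0) = 0
        rw [if_neg hm]
      show (if ti = si then 1 - ∑ ti', z i si ti' else 0) + z i si ti = _
      simp [hz1]
    intro e
    rw [hDg e, hdual α hdv hres e, mul_zero]
  -- Step 2: extract a completely mixed direction
  obtain ⟨η, hη1, hη2⟩ := CPEAux.exists_pos_feasible d hz
  have hcpos : 0 < ∑ s, η s := Finset.sum_pos (fun s _ => hη1 s) univ_nonempty
  set τ : (∀ j, S j) → ℝ := fun s => η s / (∑ s', η s') with hτ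
  have hτpos : ∀ s, 0 < τ s := fun s => div_pos (hη1 s) hcpos
  have hτsum : ∑ s, τ s = 1 := by
    show ∑ s, η s / (∑ s', η s') = 1
    rw [← Finset.sum_div]
    exact div_self hcpos.ne'
  have hτdev : ∀ (i : ι) (si : S i), 0 < marg ρ i si → ∀ ti, 0 ≤ devGain u τ i si ti := by
    intro i si hm ti
    have hkey : devGain u τ i si ti = (∑ s, -(d ⟨i, (si, ti)⟩ s * η s)) / (∑ s', η s') := by
      unfold devGain
      rw [Finset.sum_div]
      refine Finset.sum_congr rfl fun s _ => ?_
      have hdb : d ⟨i, (si, ti)⟩ s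
          = if 0 < marg ρ i si ∧ s i = si then u i (Function.update s i ti) - u i s else 0 := rfl
      have hts : τ s = η s / (∑ s', η s') := rfl
      rw [hdb, hts]
      by_cases h : s i = si
      · rw [if_pos h, if_pos ⟨hm, h⟩]
        ring
      · rw [if_neg h, if_neg (by tauto)]
        simp
    rw [hkey]
    refine div_nonneg ?_ hcpos.le
    have := hη2 ⟨i, (si, ti)⟩
    unfold CPEAux.dotp at this
    rw [Finset.sum_neg_distrib]
    linarith
  -- Step 3: the perturbed sequence
  have hε1 : ∀ k : ℕ, 0 < 1 / ((k : ℝ) + 1) := fun k => by positivity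
  have hε2 : ∀ k : ℕ, 1 / ((k : ℝ) + 1) ≤ 1 := by
    intro k
    rw [div_le_one (by positivity)]
    linarith [Nat.cast_nonneg (α := ℝ) k]
  refine ⟨⟨hρ0, hρ1⟩, fun k s => (1 - 1 / ((k : ℝ) + 1)) * ρ s + (1 / ((k : ℝ) + 1)) * τ s,
    fun k => ?_, fun s => ?_, fun k i si hm si' => ?_⟩
  · constructor
    · constructor
      · intro s
        exact add_nonneg (mul_nonneg (by linarith [hε2 k]) (hρ0 s))
          (mul_nonneg (hε1 k).le (hτpos s).le)
      · rw [Finset.sum_add_distrib, ← Finset.mul_sum, ← Finset.mul_sum, hρ1, hτsum]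
        ring
    · intro s
      have A := mul_nonneg (sub_nonneg.mpr (hε2 k)) (hρ0 s)
      have B := mul_pos (hε1 k) (hτpos s)
      linarith
  · have h1 : Tendsto (fun k : ℕ => 1 / ((k : ℝ) + 1)) atTop (𝓝 0) :=
      tendsto_one_div_add_atTop_nhds_zero_nat
    have h2 := (h1.mul_const (τ s - ρ s)).const_add (ρ s)
    rw [zero_mul, add_zero] at h2
    exact h2.congr fun k => by ring
  · have hlin : devGain u (fun s => (1 - 1 / ((k : ℝ) + 1)) * ρ s + (1 / ((k : ℝ) + 1)) * τ s)
        i si si'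
        = (1 - 1 / ((k : ℝ) + 1)) * devGain u ρ i si si'
          + (1 / ((k : ℝ) + 1)) * devGain u τ i si si' := by
      unfold devGain
      rw [Finset.mul_sum, Finset.mul_sum, ← Finset.sum_add_distrib]
      refine Finset.sum_congr rfl fun s _ => ?_
      split_ifs <;> ring
    show 0 ≤ devGain u (fun s => (1 - 1 / ((k : ℝ) + 1)) * ρ s + (1 / ((k : ℝ) + 1)) * τ s) i si si'
    rw [hlin]
    exact add_nonneg (mul_nonneg (by linarith [hε2 k]) (hceq i si si'))
      (mul_nonneg (hε1 k).le (hτdev i si hm si'))
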